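/- For the uniform ensemble over y₀ ∈ {0,…,d−1} of the states σ_{y₀} = (1/d)∑_{y₁} |Ψ_{y₀y₁}⟩⟨Ψ_{y₀y₁}|, the maximum over all POVMs {M_{y₀}} of (1/d)∑_{y₀} tr(M_{y₀} σ_{y₀}) equals 1/2 + 1/(2√d). -/

import Mathlib

open Matrix Complex Finset
open scoped ComplexOrder

noncomputable section

def ω (d : ℕ) : ℂ := Complex.exp (2 * ↑Real.pi * Complex.I / (d : ℂ))

def Xp (d : ℕ) : Matrix (Fin d) (Fin d) ℂ :=
  Matrix.of fun j k => if (j : ℕ) = ((k : ℕ) + 1) % d then 1 else 0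

def Zp (d : ℕ) : Matrix (Fin d) (Fin d) ℂ :=
  Matrix.diagonal fun j => ω d ^ (j : ℕ)

def Fm (d : ℕ) : Matrix (Fin d) (Fin d) ℂ :=
  Matrix.of fun j k => ω d ^ ((j : ℕ) * (k : ℕ)) / ((Real.sqrt d : ℝ) : ℂ)

def ket (d : ℕ) (y : Fin d) : Fin d → ℂ := fun j => if j = y then 1 else 0

def e0 (d : ℕ) : Fin d → ℂ := fun j => if (j : ℕ) = 0 then 1 else 0

def Psi (d : ℕ) : Fin d → ℂ :=
  (((Real.sqrt (2 * (1 + 1 / Real.sqrt d)) : ℝ) : ℂ))⁻¹ •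
    (e0 d + (Fm d).mulVec (e0 d))

def dotc {d : ℕ} (v w : Fin d → ℂ) : ℂ := ∑ j, (starRingEnd ℂ) (v j) * w j

def outer {d : ℕ} (v : Fin d → ℂ) : Matrix (Fin d) (Fin d) ℂ :=
  Matrix.of fun i j => v i * (starRingEnd ℂ) (v j)

def enc (d : ℕ) (y₀ y₁ : Fin d) : Fin d → ℂ :=
  ((Xp d ^ (y₀ : ℕ)) * (Zp d ^ (y₁ : ℕ))).mulVec (Psi d)

variable {d : ℕ}
open Fin.NatCast Fin.CommRing

lemma omega_prim (hd : d ≠ 0) : IsPrimitiveRoot (ω d) d := by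
  have := Complex.isPrimitiveRoot_exp d hd
  simpa [ω, Complex.exp_nat_mul, mul_comm, div_eq_mul_inv, mul_assoc, mul_left_comm] using this

lemma Fm_mulVec_e0 (hd : 0 < d) (j : Fin d) :
    (Fm d).mulVec (e0 d) j = ((Real.sqrt d : ℝ) : ℂ)⁻¹ := by
  rw [Matrix.mulVec, dotProduct]
  rw [Finset.sum_eq_single (⟨0, hd⟩ : Fin d)]
  · simp [Fm, e0, div_eq_mul_inv]
  · intro b _ hb
    simp [e0, Fin.ext_iff] at hb ⊢
    intro h; exact absurd h hb
  · simp
def psiR (d : ℕ) (j : Fin d) : ℝ :=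
  (if (j:ℕ) = 0 then 1 + (Real.sqrt d)⁻¹ else (Real.sqrt d)⁻¹) /
    Real.sqrt (2 * (1 + 1 / Real.sqrt d))

lemma Psi_eq (hd : 0 < d) (j : Fin d) : Psi d j = ((psiR d j : ℝ) : ℂ) := by
  simp only [Psi, Pi.smul_apply, Pi.add_apply, Fm_mulVec_e0 hd, e0, psiR, smul_eq_mul]
  split <;> · push_cast; ring
lemma Xp_eq [NeZero d] : Xp d = Matrix.of (fun j k : Fin d => if j = k + 1 then 1 else 0) := by
  ext j k
  simp only [Xp, Matrix.of_apply]
  congr 1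
  rw [Fin.ext_iff, Fin.add_def]
  simp [Fin.val_one', Nat.add_mod]

lemma Xp_pow [NeZero d] (a : ℕ) :
    Xp d ^ a = Matrix.of (fun j k : Fin d => if j = k + (a : Fin d) then 1 else 0) := by
  induction a with
  | zero => ext j k; simp [Matrix.one_apply, eq_comm]
  | succ a ih =>
    ext j k
    rw [pow_succ, ih, Xp_eq, Matrix.mul_apply]
    rw [Finset.sum_eq_single (k + 1)]
    · push_cast
      by_cases h : j = k + 1 + (a : Fin d)
      · have h' : j = k + ((a : Fin d) + 1) := by rw [h]; ring
        have : k + 1 + (a : Fin d) = k + ((a : Fin d) + 1) := by ring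
        simp [h, h', this]
      · have h' : ¬ j = k + ((a : Fin d) + 1) := by
          intro hc; exact h (by rw [hc]; ring)
        have : k + 1 + (a : Fin d) = k + ((a : Fin d) + 1) := by ring
        simp [h, h', this]
    · intro b _ hb
      simp [hb]
    · simp
lemma enc_apply [NeZero d] (y₀ y₁ j : Fin d) :
    enc d y₀ y₁ j = ω d ^ (((j - y₀ : Fin d) : ℕ) * (y₁ : ℕ)) * Psi d (j - y₀) := by
  rw [enc, ← Matrix.mulVec_mulVec]
  have hz : (Zp d ^ (y₁ : ℕ)).mulVec (Psi d) =
      fun (k : Fin d) => ω d ^ ((k : ℕ) * (y₁ : ℕ)) * Psi d k := by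
    funext k
    rw [Zp, Matrix.diagonal_pow, Matrix.mulVec_diagonal, Pi.pow_apply, ← pow_mul]
  rw [hz, Xp_pow]
  rw [Matrix.mulVec, dotProduct]
  rw [Finset.sum_eq_single (j - y₀)]
  · have : j = j - y₀ + ((y₀ : ℕ) : Fin d) := by
      rw [Fin.cast_val_eq_self, sub_add_cancel]
    simp [Matrix.of_apply, ← this]
  · intro b _ hb
    have : ¬ j = b + y₀ := fun h => hb (by rw [h]; ring)
    simp [Fin.cast_val_eq_self, this]
  · simp
lemma sum_omega (hd : d ≠ 0) (m : ℕ) :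
    ∑ y₁ : Fin d, (ω d ^ m) ^ (y₁ : ℕ) = if d ∣ m then (d : ℂ) else 0 := by
  have hω := omega_prim hd
  rw [Fin.sum_univ_eq_sum_range (fun i => (ω d ^ m) ^ i) d]
  by_cases h : d ∣ m
  · obtain ⟨c, rfl⟩ := h
    simp [pow_mul, hω.pow_eq_one]
  · have h1 : ω d ^ m ≠ 1 := fun hc => h ((hω.pow_eq_one_iff_dvd m).mp hc)
    rw [geom_sum_eq h1, if_neg h]
    have : (ω d ^ m) ^ d = 1 := by
      rw [← pow_mul, mul_comm, pow_mul, hω.pow_eq_one, one_pow]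
    simp [this]

lemma key_dvd (hd : d ≠ 0) (a b : ℕ) (ha : a < d) (hb : b < d) :
    d ∣ (a + (d - 1) * b) ↔ a = b := by
  rw [← ZMod.natCast_eq_zero_iff]
  push_cast [Nat.cast_sub (Nat.one_le_iff_ne_zero.mpr hd)]
  rw [ZMod.natCast_self]
  constructor
  · intro h
    have h2 : (a : ZMod d) = (b : ZMod d) := by linear_combination h
    rw [ZMod.natCast_eq_natCast_iff'] at h2
    rwa [Nat.mod_eq_of_lt ha, Nat.mod_eq_of_lt hb] at h2
  · rintro rfl; ring
lemma conj_omega (hd : d ≠ 0) : (starRingEnd ℂ) (ω d) = ω d ^ (d - 1) := by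
  have hω := omega_prim hd
  have h1 : ω d ^ (d - 1) * ω d = 1 := by
    rw [← pow_succ, Nat.sub_add_cancel (Nat.one_le_iff_ne_zero.mpr hd), hω.pow_eq_one]
  have h2 : (starRingEnd ℂ) (ω d) = (ω d)⁻¹ := by
    rw [ω, ← Complex.exp_conj, ← Complex.exp_neg]
    congr 1
    have h2 : (starRingEnd ℂ) (2:ℂ) = 2 := by rw [show (2:ℂ) = ((2:ℝ):ℂ) by norm_num, Complex.conj_ofReal]
    simp [map_div₀, Complex.conj_I, h2]
    ring
  rw [h2]
  exact (eq_inv_of_mul_eq_one_left h1).symm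

lemma sigma_eq (hd : d ≠ 0) (y₀ : Fin d) :
    ((d:ℂ))⁻¹ • ∑ y₁ : Fin d, outer (enc d y₀ y₁) =
      Matrix.diagonal (fun j : Fin d => ((psiR d (j - y₀) ^ 2 : ℝ) : ℂ)) := by
  haveI : NeZero d := ⟨hd⟩
  have hd0 : 0 < d := Nat.pos_of_ne_zero hd
  ext i j
  simp only [Matrix.smul_apply, Matrix.sum_apply, outer, Matrix.of_apply, smul_eq_mul]
  have step : ∀ y₁ : Fin d, enc d y₀ y₁ i * (starRingEnd ℂ) (enc d y₀ y₁ j)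
      = (Psi d (i - y₀) * Psi d (j - y₀)) *
        ((ω d ^ (((i - y₀ : Fin d) : ℕ) + (d - 1) * ((j - y₀ : Fin d) : ℕ))) ^ (y₁ : ℕ)) := by
    intro y₁
    rw [enc_apply, enc_apply, RingHom.map_mul]
    rw [Psi_eq hd0 (j - y₀), Complex.conj_ofReal, ← Psi_eq hd0 (j - y₀)]
    have hc : (starRingEnd ℂ) (ω d ^ (((j - y₀ : Fin d) : ℕ) * (y₁ : ℕ)))
        = (ω d ^ ((d - 1) * ((j - y₀ : Fin d) : ℕ))) ^ (y₁ : ℕ) := by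
      rw [map_pow, conj_omega hd, ← pow_mul, ← pow_mul]
      ring_nf
    rw [hc, pow_add, mul_pow, pow_mul]
    ring
  rw [Finset.sum_congr rfl (fun y₁ _ => step y₁), ← Finset.mul_sum, sum_omega hd]
  have hsub : ((i - y₀ : Fin d) : ℕ) = ((j - y₀ : Fin d) : ℕ) ↔ i = j := by
    rw [← Fin.ext_iff, sub_left_inj]
  by_cases h : i = j
  · subst h
    rw [if_pos ((key_dvd hd _ _ (Fin.is_lt _) (Fin.is_lt _)).mpr rfl),
      Matrix.diagonal_apply_eq, Psi_eq hd0]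
    have hdc : (d : ℂ) ≠ 0 := Nat.cast_ne_zero.mpr hd
    push_cast
    field_simp
  · rw [if_neg (fun hc => h (hsub.mp ((key_dvd hd _ _ (Fin.is_lt _) (Fin.is_lt _)).mp hc))),
      Matrix.diagonal_apply_ne _ h, mul_zero, mul_zero]
lemma hmax_eq (hd1 : 1 ≤ d) :
    (1 + 1/Real.sqrt d)^2 / (2*(1 + 1/Real.sqrt d)) = 1/2 + 1/(2*Real.sqrt d) := by
  have ha : (1:ℝ) ≤ Real.sqrt d := by
    rw [show (1:ℝ) = Real.sqrt 1 by simp]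
    exact Real.sqrt_le_sqrt (by exact_mod_cast hd1)
  have ha0 : (0:ℝ) < Real.sqrt d := lt_of_lt_of_le one_pos ha
  have hs : (0:ℝ) < 1 + 1/Real.sqrt d := by positivity
  have hsq : Real.sqrt d ^ 2 = (d:ℝ) := Real.sq_sqrt (by positivity)
  field_simp

lemma psiR_sq_zero (hd1 : 1 ≤ d) (k : Fin d) (hk : (k:ℕ) = 0) :
    psiR d k ^ 2 = 1/2 + 1/(2*Real.sqrt d) := by
  have ha : (1:ℝ) ≤ Real.sqrt d := by
    rw [show (1:ℝ) = Real.sqrt 1 by simp]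
    exact Real.sqrt_le_sqrt (by exact_mod_cast hd1)
  have ha0 : (0:ℝ) < Real.sqrt d := lt_of_lt_of_le one_pos ha
  have hs : (0:ℝ) < 1 + 1/Real.sqrt d := by positivity
  rw [psiR, if_pos hk, div_pow, Real.sq_sqrt (by positivity), ← hmax_eq hd1]
  norm_num

lemma psiR_sq_le (hd1 : 1 ≤ d) (k : Fin d) :
    psiR d k ^ 2 ≤ 1/2 + 1/(2*Real.sqrt d) := by
  by_cases hk : (k:ℕ) = 0
  · exact le_of_eq (psiR_sq_zero hd1 k hk)
  have ha : (1:ℝ) ≤ Real.sqrt d := by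
    rw [show (1:ℝ) = Real.sqrt 1 by simp]
    exact Real.sqrt_le_sqrt (by exact_mod_cast hd1)
  have ha0 : (0:ℝ) < Real.sqrt d := lt_of_lt_of_le one_pos ha
  have hs : (0:ℝ) < 1 + 1/Real.sqrt d := by positivity
  rw [psiR, if_neg hk, div_pow, Real.sq_sqrt (by positivity), ← hmax_eq hd1]
  gcongr
  rw [one_div]
  have h0 : 0 ≤ (Real.sqrt d)⁻¹ := by positivity
  linarith

lemma trace_mul_diag (M : Matrix (Fin d) (Fin d) ℂ) (f : Fin d → ℂ) :
    (M * Matrix.diagonal f).trace = ∑ j, M j j * f j := by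
  simp [Matrix.trace, Matrix.diag, Matrix.mul_diagonal]

lemma psd_diag_re_nonneg {M : Matrix (Fin d) (Fin d) ℂ} (h : M.PosSemidef) (j : Fin d) :
    0 ≤ (M j j).re := by
  have h2 := h.dotProduct_mulVec_nonneg (Pi.single j 1)
  have h3 : star (Pi.single j 1 : Fin d → ℂ) ⬝ᵥ M.mulVec (Pi.single j 1) = M j j := by
    simp [dotProduct, Matrix.mulVec, Pi.single_apply]
  rw [h3] at h2
  exact (Complex.le_def.mp h2).1

lemma outer_psd (v : Fin d → ℂ) : (outer v).PosSemidef := by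
  rw [Matrix.posSemidef_iff_dotProduct_mulVec]
  constructor
  · ext i j
    simp [outer, Matrix.conjTranspose_apply, mul_comm]
  · intro x
    have h : star x ⬝ᵥ (outer v).mulVec x
        = star (∑ j, (starRingEnd ℂ) (v j) * x j) * (∑ j, (starRingEnd ℂ) (v j) * x j) := by
      simp only [dotProduct, Matrix.mulVec, outer, Matrix.of_apply, Pi.star_apply,
        star_sum, star_mul', RCLike.star_def, Complex.conj_conj, Finset.sum_mul,
        Finset.mul_sum]
      rw [Finset.sum_comm]
      apply Finset.sum_congr rfl; intro i _
      apply Finset.sum_congr rfl; intro j _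
      ring
    rw [h]
    exact star_mul_self_nonneg _
theorem stmt_9 (d : ℕ) (hd : Nat.Prime d) :
    IsGreatest {x : ℝ | ∃ M : Fin d → Matrix (Fin d) (Fin d) ℂ,
        (∀ y₀, (M y₀).PosSemidef) ∧ (∑ y₀, M y₀ = 1) ∧
        x = (d : ℝ)⁻¹ * ∑ y₀ : Fin d,
          ((M y₀ * (((d : ℂ))⁻¹ • ∑ y₁ : Fin d, outer (enc d y₀ y₁))).trace).re}
      (1 / 2 + 1 / (2 * Real.sqrt d)) := by
  have hd0 : d ≠ 0 := hd.pos.ne'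
  haveI : NeZero d := ⟨hd0⟩
  have hd1 : 1 ≤ d := hd.pos
  have hdR : (d:ℝ) ≠ 0 := Nat.cast_ne_zero.mpr hd0
  constructor
  · refine ⟨fun y₀ => outer (ket d y₀), fun y₀ => outer_psd _, ?_, ?_⟩
    · ext i j
      rw [Matrix.sum_apply]
      by_cases h : i = j
      · subst h
        rw [Matrix.one_apply_eq, Finset.sum_eq_single i]
        · simp [outer, ket]
        · intro b _ hb; simp [outer, ket, Ne.symm hb]
        · simp
      · rw [Matrix.one_apply_ne h]
        apply Finset.sum_eq_zero
        intro y₀ _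
        by_cases h1 : i = y₀
        · subst h1
          have : j ≠ i := Ne.symm h
          simp [outer, ket, this]
        · simp [outer, ket, h1]
    · have hv : ∀ y₀ : Fin d,
          ((outer (ket d y₀) * (((d:ℂ))⁻¹ • ∑ y₁, outer (enc d y₀ y₁))).trace).re
            = 1/2 + 1/(2*Real.sqrt d) := by
        intro y₀
        rw [sigma_eq hd0, trace_mul_diag]
        rw [Finset.sum_eq_single y₀]
        · have h0 : ((y₀ - y₀ : Fin d) : ℕ) = 0 := by simp
          simp only [outer, Matrix.of_apply, ket]
          simp
          rw [← Complex.ofReal_pow, Complex.ofReal_re, psiR_sq_zero hd1 _ (by simp)]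
          ring
        · intro b _ hb; simp [outer, ket, hb]
        · simp
      rw [Finset.sum_congr rfl (fun y₀ _ => hv y₀), Finset.sum_const, Finset.card_univ,
        Fintype.card_fin, nsmul_eq_mul]
      exact (inv_mul_cancel_left₀ hdR _).symm
  · rintro x ⟨M, hpsd, hsum, rfl⟩
    set pm : ℝ := 1/2 + 1/(2*Real.sqrt d) with hpm
    have hre : ∀ y₀ : Fin d,
        ((M y₀ * (((d:ℂ))⁻¹ • ∑ y₁, outer (enc d y₀ y₁))).trace).re
          = ∑ j, (M y₀ j j).re * psiR d (j - y₀) ^ 2 := by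
      intro y₀
      rw [sigma_eq hd0, trace_mul_diag, Complex.re_sum]
      exact Finset.sum_congr rfl fun j _ => by simp [Complex.mul_re, ← Complex.ofReal_pow]
    have htr : ∑ y₀ : Fin d, ∑ j, (M y₀ j j).re = d := by
      have h1 := congrArg Matrix.trace hsum
      rw [Matrix.trace_sum, Matrix.trace_one] at h1
      have h2 := congrArg Complex.re h1
      rw [Complex.re_sum] at h2
      have h3 : ∀ y₀ : Fin d, ((M y₀).trace).re = ∑ j, (M y₀ j j).re := by
        intro y₀; rw [Matrix.trace, Complex.re_sum]; rfl
      rw [Finset.sum_congr rfl (fun y₀ _ => h3 y₀)] at h2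
      rw [h2]
      simp
    have hbound : ∑ y₀ : Fin d, ∑ j, (M y₀ j j).re * psiR d (j - y₀) ^ 2 ≤ (d:ℝ) * pm := by
      calc ∑ y₀ : Fin d, ∑ j, (M y₀ j j).re * psiR d (j - y₀) ^ 2
          ≤ ∑ y₀ : Fin d, ∑ j, (M y₀ j j).re * pm := by
            apply Finset.sum_le_sum; intro y₀ _
            apply Finset.sum_le_sum; intro j _
            exact mul_le_mul_of_nonneg_left (psiR_sq_le hd1 _) (psd_diag_re_nonneg (hpsd y₀) j)
        _ = (∑ y₀ : Fin d, ∑ j, (M y₀ j j).re) * pm := by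
            rw [Finset.sum_mul]
            exact Finset.sum_congr rfl fun y₀ _ => (Finset.sum_mul _ _ _).symm
        _ = (d:ℝ) * pm := by rw [htr]
    rw [Finset.sum_congr rfl (fun y₀ _ => hre y₀)]
    calc (d:ℝ)⁻¹ * ∑ y₀ : Fin d, ∑ j, (M y₀ j j).re * psiR d (j - y₀) ^ 2
        ≤ (d:ℝ)⁻¹ * ((d:ℝ) * pm) := by
          apply mul_le_mul_of_nonneg_left hbound (by positivity)
      _ = pm := by field_simp
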